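/- arXiv:1902.02131 — 7 statements merged into one kernel-verified Lean document; each statement's English description precedes it below -/
import Mathlib

section
/- The Grundy value of a position (x_1,...,x_n) in the cyclic Nimhoff game with parameter h equals (⊕_i ⌊x_i/h⌋)·h + ((Σ_i x_i) mod h), where ⊕ denotes nim-sum (XOR). -/
open Finset

/-- mex of a set of naturals. -/
noncomputable def mex (T : Set ℕ) : ℕ := sInf Tᶜ

/-- Grundy value of the subtraction game Subtraction(S) on a heap of size x. -/
noncomputable def subG (S : Set ℕ) (x : ℕ) : ℕ :=
  mex {g | ∃ s, ∃ _ : s ∈ S ∧ 0 < s ∧ s ≤ x, g = subG S (x - s)}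
termination_by x
decreasing_by rename_i hs; obtain ⟨_, h1, h2⟩ := hs; omega

/-- Moves of the generalized cyclic Nimhoff GCN(h; S_1, ..., S_n). -/
def gcnMove {n : ℕ} (h : ℕ) (S : Fin n → Set ℕ) (x y : Fin n → ℕ) : Prop :=
  (∃ i, ∃ s, s ∈ S i ∧ 0 < s ∧ s ≤ x i ∧ y = Function.update x i (x i - s)) ∨
  (∃ s : Fin n → ℕ, (∀ i, s i ≤ x i) ∧ 0 < ∑ i, s i ∧ ∑ i, s i < h ∧
    y = fun i => x i - s i)

theorem gcnMove_sum_lt {n h : ℕ} {S : Fin n → Set ℕ} {x y : Fin n → ℕ}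
    (m : gcnMove h S x y) : ∑ i, y i < ∑ i, x i := by
  rcases m with ⟨i, s, _, hs0, hsx, rfl⟩ | ⟨s, hle, hpos, _, rfl⟩
  · refine Finset.sum_lt_sum (fun j _ => ?_) ⟨i, Finset.mem_univ i, ?_⟩
    · by_cases hj : j = i
      · subst hj; simp [Function.update]
      · simp [Function.update, hj]
    · simp [Function.update]; omega
  · obtain ⟨i, _, hi⟩ := Finset.exists_ne_zero_of_sum_ne_zero (by omega :
      ∑ i, s i ≠ 0)
    refine Finset.sum_lt_sum (fun j _ => by omega) ⟨i, Finset.mem_univ i, ?_⟩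
    have := hle i; omega

/-- Grundy value of a position of the generalized cyclic Nimhoff. -/
noncomputable def gcnGrundy (n h : ℕ) (S : Fin n → Set ℕ) (x : Fin n → ℕ) : ℕ :=
  mex {g | ∃ y, ∃ _ : gcnMove h S x y, g = gcnGrundy n h S y}
termination_by ∑ i, x i
decreasing_by exact gcnMove_sum_lt ‹_›


lemma xor_left_comm' (a b c : ℕ) : a ^^^ (b ^^^ c) = b ^^^ (a ^^^ c) := by
  rw [← Nat.xor_assoc, Nat.xor_comm a b, Nat.xor_assoc]

lemma xor_cancel' (a b : ℕ) : a ^^^ (a ^^^ b) = b := by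
  rw [← Nat.xor_assoc, Nat.xor_self, Nat.zero_xor]

lemma mex_eq (T : Set ℕ) (v : ℕ) (hv : v ∉ T) (hlt : ∀ g < v, g ∈ T) : mex T = v := by
  unfold mex
  have h1 : v ∈ Tᶜ := hv
  refine le_antisymm (Nat.sInf_le h1) ?_
  by_contra hc
  push_neg at hc
  have hm : sInf Tᶜ ∈ Tᶜ := Nat.sInf_mem ⟨v, h1⟩
  exact hm (hlt _ hc)

def nimval (h : ℕ) {n : ℕ} (x : Fin n → ℕ) : ℕ :=
  (Finset.univ.fold (· ^^^ · : ℕ → ℕ → ℕ) 0 (fun i => x i / h)) * h + (∑ i, x i) % h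

lemma val_inj {h a b r r' : ℕ} (hr : r < h) (hr' : r' < h)
    (e : a * h + r = b * h + r') : a = b ∧ r = r' := by
  have hh : 0 < h := by omega
  have e1 : (a * h + r) / h = a := by
    rw [mul_comm, Nat.mul_add_div hh, Nat.div_eq_of_lt hr, Nat.add_zero]
  have e2 : (b * h + r') / h = b := by
    rw [mul_comm, Nat.mul_add_div hh, Nat.div_eq_of_lt hr', Nat.add_zero]
  have hab : a = b := by rw [← e1, ← e2, e]
  constructor
  · exact hab
  · subst hab; omega

lemma fold_xor_erase {n : ℕ} (f : Fin n → ℕ) (i : Fin n) :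
    Finset.univ.fold (· ^^^ · : ℕ → ℕ → ℕ) 0 f
      = f i ^^^ (Finset.univ.erase i).fold (· ^^^ · : ℕ → ℕ → ℕ) 0 f := by
  conv_lhs => rw [← Finset.insert_erase (Finset.mem_univ i)]
  exact Finset.fold_insert (Finset.notMem_erase i _)

lemma fold_xor_update {n : ℕ} (f : Fin n → ℕ) (i : Fin n) (a : ℕ) :
    Finset.univ.fold (· ^^^ · : ℕ → ℕ → ℕ) 0 (Function.update f i a)
      = a ^^^ (f i ^^^ Finset.univ.fold (· ^^^ · : ℕ → ℕ → ℕ) 0 f) := by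
  rw [fold_xor_erase (Function.update f i a) i, fold_xor_erase f i]
  have hc : (Finset.univ.erase i).fold (· ^^^ · : ℕ → ℕ → ℕ) 0 (Function.update f i a)
      = (Finset.univ.erase i).fold (· ^^^ · : ℕ → ℕ → ℕ) 0 f := by
    apply Finset.fold_congr
    intro j hj
    exact Function.update_of_ne (Finset.ne_of_mem_erase hj) _ _
  rw [hc, Function.update_self, ← Nat.xor_assoc (f i) (f i), Nat.xor_self, Nat.zero_xor]

lemma nim_exists_aux {n : ℕ} (f : Fin n → ℕ) (u : Finset (Fin n)) :
    ∀ Y, Y < u.fold (· ^^^ · : ℕ → ℕ → ℕ) 0 f →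
      ∃ i ∈ u, f i ^^^ (u.fold (· ^^^ · : ℕ → ℕ → ℕ) 0 f ^^^ Y) < f i := by
  induction u using Finset.induction with
  | empty => intro Y hY; simp at hY
  | @insert a u ha ih =>
    intro Y hY
    rw [Finset.fold_insert ha] at hY ⊢
    rcases Nat.lt_xor_cases hY with h1 | h1
    · refine ⟨a, Finset.mem_insert_self a u, ?_⟩
      have : f a ^^^ (f a ^^^ u.fold (· ^^^ · : ℕ → ℕ → ℕ) 0 f ^^^ Y)
          = u.fold (· ^^^ · : ℕ → ℕ → ℕ) 0 f ^^^ Y := by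
        rw [← Nat.xor_assoc, ← Nat.xor_assoc, Nat.xor_self, Nat.zero_xor]
      rw [this]
      rwa [Nat.xor_comm] at h1
    · rw [Nat.xor_comm] at h1
      obtain ⟨i, hi, hlt⟩ := ih (f a ^^^ Y) h1
      refine ⟨i, Finset.mem_insert_of_mem hi, ?_⟩
      have : f a ^^^ u.fold (· ^^^ · : ℕ → ℕ → ℕ) 0 f ^^^ Y
          = u.fold (· ^^^ · : ℕ → ℕ → ℕ) 0 f ^^^ (f a ^^^ Y) := by
        rw [← Nat.xor_assoc, Nat.xor_comm (f a), Nat.xor_assoc]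
      rwa [this]

lemma exists_parts {n : ℕ} (f : Fin n → ℕ) :
    ∀ (u : Finset (Fin n)) (t : ℕ), t ≤ ∑ i ∈ u, f i →
      ∃ s : Fin n → ℕ, (∀ i, s i ≤ f i) ∧ (∀ i ∉ u, s i = 0) ∧ ∑ i ∈ u, s i = t := by
  intro u
  induction u using Finset.induction with
  | empty =>
    intro t ht
    simp at ht
    exact ⟨fun _ => 0, fun i => Nat.zero_le _, fun i _ => rfl, by simp [ht]⟩
  | @insert a u ha ih =>
    intro t ht
    rw [Finset.sum_insert ha] at ht
    obtain ⟨s, hs1, hs2, hs3⟩ := ih (t - min (f a) t) (by omega)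
    refine ⟨Function.update s a (min (f a) t), ?_, ?_, ?_⟩
    · intro i
      by_cases hi : i = a
      · subst hi; simp [Function.update_self]
      · rw [Function.update_of_ne hi]; exact hs1 i
    · intro i hi
      have hia : i ≠ a := fun e => hi (e ▸ Finset.mem_insert_self a u)
      rw [Function.update_of_ne hia]
      exact hs2 i (fun hiu => hi (Finset.mem_insert_of_mem hiu))
    · rw [Finset.sum_insert ha, Function.update_self]
      have : ∑ i ∈ u, Function.update s a (min (f a) t) i = ∑ i ∈ u, s i := by
        apply Finset.sum_congr rfl
        intro i hi
        exact Function.update_of_ne (fun e => ha (by rw [← e]; exact hi)) _ _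
      rw [this, hs3]; omega

lemma sub_small {h x s : ℕ} (hh : 0 < h) (hs : s ≤ x % h) :
    (x - s) / h = x / h ∧ (x - s) % h = x % h - s := by
  have hm : x % h < h := Nat.mod_lt _ hh
  have hd : h * (x / h) + x % h = x := Nat.div_add_mod x h
  have e : x - s = h * (x / h) + (x % h - s) := by omega
  constructor
  · rw [e, Nat.mul_add_div hh, Nat.div_eq_of_lt (show x % h - s < h by omega), Nat.add_zero]
  · rw [e, Nat.mul_add_mod, Nat.mod_eq_of_lt (by omega)]

lemma sum_sub_of_le {n : ℕ} {x s : Fin n → ℕ} (hle : ∀ i, s i ≤ x i) :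
    ∑ i, (x i - s i) = ∑ i, x i - ∑ i, s i := by
  have h1 : ∑ i, (x i - s i) + ∑ i, s i = ∑ i, x i := by
    rw [← Finset.sum_add_distrib]
    exact Finset.sum_congr rfl (fun i _ => by have := hle i; omega)
  have h2 : ∑ i, s i ≤ ∑ i, x i := Finset.sum_le_sum (fun i _ => hle i)
  omega

lemma val_ne_of_move {n h : ℕ} (hh : 0 < h) {x y : Fin n → ℕ}
    (m : gcnMove h (fun _ => {s : ℕ | 0 < s}) x y) : nimval h y ≠ nimval h x := by
  intro e
  unfold nimval at e
  have hmlt := Nat.mod_lt (∑ i, y i) hh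
  have hmlt' := Nat.mod_lt (∑ i, x i) hh
  rcases m with ⟨i, s, _, hs0, hsx, rfl⟩ | ⟨s, hle, hpos, hlth, rfl⟩
  · -- single-heap move
    have hq : (fun j => Function.update x i (x i - s) j / h)
        = Function.update (fun j => x j / h) i ((x i - s) / h) := by
      funext j
      by_cases hj : j = i
      · subst hj; simp [Function.update_self]
      · simp [Function.update_of_ne hj]
    have hxi : x i ≤ ∑ j, x j :=
      Finset.single_le_sum (fun j _ => Nat.zero_le (x j)) (Finset.mem_univ i)
    have hsum : ∑ j, Function.update x i (x i - s) j = ∑ j, x j - s := by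
      rw [Finset.sum_update_of_mem (Finset.mem_univ i)]
      have h2 : ∑ j ∈ Finset.univ \ {i}, x j = ∑ j, x j - x i := by
        rw [Finset.sdiff_singleton_eq_erase]
        have := Finset.sum_erase_add Finset.univ x (Finset.mem_univ i)
        omega
      omega
    rw [hq, hsum, fold_xor_update] at e
    obtain ⟨eX, eR⟩ := val_inj (Nat.mod_lt _ hh) (Nat.mod_lt _ hh) e
    -- quotients equal
    have hqq : (x i - s) / h = x i / h := by
      have h3 : ((x i - s) / h ^^^ x i / h) ^^^
          Finset.univ.fold (· ^^^ · : ℕ → ℕ → ℕ) 0 (fun j => x j / h)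
          = Finset.univ.fold (· ^^^ · : ℕ → ℕ → ℕ) 0 (fun j => x j / h) := by
        rw [Nat.xor_assoc]; exact eX
      have h4 : (x i - s) / h ^^^ x i / h = 0 := by
        calc (x i - s) / h ^^^ x i / h
            = ((x i - s) / h ^^^ x i / h) ^^^
                Finset.univ.fold (· ^^^ · : ℕ → ℕ → ℕ) 0 (fun j => x j / h) ^^^
                Finset.univ.fold (· ^^^ · : ℕ → ℕ → ℕ) 0 (fun j => x j / h) := by
              rw [Nat.xor_assoc, Nat.xor_self, Nat.xor_zero]
          _ = 0 := by rw [h3, Nat.xor_self]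
      exact xor_eq_zero_iff.mp h4
    -- hence s < h
    have hslt : s < h := by
      have e1 : h * (x i / h) + x i % h = x i := Nat.div_add_mod (x i) h
      have e2 : h * ((x i - s) / h) + (x i - s) % h = x i - s := Nat.div_add_mod (x i - s) h
      rw [hqq] at e2
      have hm1 : x i % h < h := Nat.mod_lt _ hh
      have hm2 : (x i - s) % h < h := Nat.mod_lt _ hh
      omega
    -- mod equality forces h ∣ s
    have hsle : s ≤ ∑ j, x j := le_trans hsx hxi
    have hdvd : h ∣ s := by
      have h6 := (Nat.modEq_iff_dvd' (Nat.sub_le (∑ j, x j) s)).mp eR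
      rwa [Nat.sub_sub_self hsle] at h6
    exact absurd (Nat.le_of_dvd hs0 hdvd) (by omega)
  · -- cyclic move
    have hsum : ∑ j, (x j - s j) = ∑ j, x j - ∑ j, s j := sum_sub_of_le hle
    rw [hsum] at e
    obtain ⟨eX, eR⟩ := val_inj (Nat.mod_lt _ hh) (Nat.mod_lt _ hh) e
    have hts : ∑ j, s j ≤ ∑ j, x j := Finset.sum_le_sum (fun j _ => hle j)
    have hdvd : h ∣ ∑ j, s j := by
      have := (Nat.modEq_iff_dvd' (Nat.sub_le (∑ j, x j) (∑ j, s j))).mp eR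
      simpa [Nat.sub_sub_self hts] using this
    exact absurd (Nat.le_of_dvd hpos hdvd) (by omega)

lemma xor_calc (a b c : ℕ) : (a ^^^ (b ^^^ c)) ^^^ (a ^^^ b) = c := by
  simp [Nat.xor_assoc, Nat.xor_comm, xor_left_comm', xor_cancel', Nat.xor_self,
    Nat.xor_zero, Nat.zero_xor]

lemma exists_move {n h : ℕ} (hh : 0 < h) (x : Fin n → ℕ) (g : ℕ)
    (hg : g < nimval h x) :
    ∃ y, gcnMove h (fun _ => {s : ℕ | 0 < s}) x y ∧ nimval h y = g := by
  have hρ : g % h < h := Nat.mod_lt _ hh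
  have hR : (∑ i, x i) % h < h := Nat.mod_lt _ hh
  have hgd : g / h * h + g % h = g := Nat.div_add_mod' g h
  set X := Finset.univ.fold (· ^^^ · : ℕ → ℕ → ℕ) 0 (fun i => x i / h) with hX
  have h1 : g / h * h + g % h < X * h + (∑ i, x i) % h := by rw [hgd]; exact hg
  have hYX : g / h ≤ X := by
    have h2 : g / h * h < (X + 1) * h := by
      have h3 : (X + 1) * h = X * h + h := by ring
      omega
    exact Nat.lt_succ_iff.mp (Nat.lt_of_mul_lt_mul_right h2)
  rcases eq_or_lt_of_le hYX with hE | hlt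
  · -- quotients stay, cyclic move
    have hρR : g % h < (∑ i, x i) % h := by rw [hE] at h1; omega
    have htle : (∑ i, x i) % h - g % h ≤ ∑ i, x i % h := by
      have h2 : (∑ i, x i) % h = (∑ i, x i % h) % h := Finset.sum_nat_mod _ _ _
      have h3 : (∑ i, x i % h) % h ≤ ∑ i, x i % h := Nat.mod_le _ _
      omega
    obtain ⟨s, hs1, -, hs3⟩ := exists_parts (fun i => x i % h) Finset.univ
      ((∑ i, x i) % h - g % h) htle
    have hsx : ∀ i, s i ≤ x i := fun i => le_trans (hs1 i) (Nat.mod_le _ _)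
    refine ⟨fun i => x i - s i, Or.inr ⟨s, hsx, by omega, by omega, rfl⟩, ?_⟩
    unfold nimval
    have hfold : Finset.univ.fold (· ^^^ · : ℕ → ℕ → ℕ) 0 (fun i => (x i - s i) / h)
        = X := by
      rw [hX]
      exact Finset.fold_congr (fun i _ => (sub_small hh (hs1 i)).1)
    have hsum : ∑ i, (x i - s i) = ∑ i, x i - ((∑ i, x i) % h - g % h) := by
      rw [sum_sub_of_le hsx, hs3]
    have hmod : (∑ i, x i - ((∑ i, x i) % h - g % h)) % h = g % h := by
      have hd : (∑ i, x i) / h * h + (∑ i, x i) % h = ∑ i, x i := Nat.div_add_mod' _ _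
      have e2 : ∑ i, x i - ((∑ i, x i) % h - g % h) = (∑ i, x i) / h * h + g % h := by
        omega
      rw [e2, Nat.mul_comm ((∑ i, x i) / h) h, Nat.mul_add_mod, Nat.mod_eq_of_lt hρ]
    rw [hfold, hsum, hmod, ← hE]
    exact hgd
  · -- single-heap move
    obtain ⟨i, -, hi⟩ := nim_exists_aux (fun j => x j / h) Finset.univ (g / h)
      (by rw [← hX]; exact hlt)
    rw [← hX] at hi
    set A := ∑ j ∈ Finset.univ \ {i}, x j with hA
    have hAm : A % h < h := Nat.mod_lt _ hh
    set r' := (g % h + (h - A % h)) % h with hr'def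
    have hr' : r' < h := Nat.mod_lt _ hh
    set q' := x i / h ^^^ (X ^^^ g / h) with hq'def
    have hq'q : q' < x i / h := hi
    have hx'lt : q' * h + r' < x i := by
      have h2 : (q' + 1) * h ≤ (x i / h) * h :=
        Nat.mul_le_mul_right h (by omega)
      have h3 : (x i / h) * h ≤ x i := Nat.div_mul_le_self _ _
      have h4 : (q' + 1) * h = q' * h + h := by ring
      omega
    refine ⟨Function.update x i (q' * h + r'),
      Or.inl ⟨i, x i - (q' * h + r'), by simp only [Set.mem_setOf_eq]; omega, by omega,
        Nat.sub_le _ _, by rw [Nat.sub_sub_self (Nat.le_of_lt hx'lt)]⟩, ?_⟩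
    unfold nimval
    have hq : (fun j => Function.update x i (q' * h + r') j / h)
        = Function.update (fun j => x j / h) i q' := by
      funext j
      by_cases hj : j = i
      · subst hj
        simp only [Function.update_self]
        rw [Nat.mul_comm q' h, Nat.mul_add_div hh, Nat.div_eq_of_lt hr', Nat.add_zero]
      · simp [Function.update_of_ne hj]
    have hfold : Finset.univ.fold (· ^^^ · : ℕ → ℕ → ℕ) 0
        (fun j => Function.update x i (q' * h + r') j / h) = g / h := by
      rw [hq, fold_xor_update, ← hX, hq'def]
      exact xor_calc (x i / h) X (g / h)
    have hsum : ∑ j, Function.update x i (q' * h + r') j = q' * h + r' + A := by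
      rw [Finset.sum_update_of_mem (Finset.mem_univ i), hA]
    have hmod : (q' * h + r' + A) % h = g % h := by
      rw [Nat.add_assoc, Nat.mul_comm q' h, Nat.mul_add_mod, hr'def, Nat.mod_add_mod]
      have hd : A / h * h + A % h = A := Nat.div_add_mod' A h
      have e4 : g % h + (h - A % h) + A = g % h + h + A / h * h := by omega
      rw [e4, Nat.add_mul_mod_self_right, Nat.add_mod_right, Nat.mod_eq_of_lt hρ]
    rw [hfold, hsum, hmod]
    exact hgd

/-- Grundy value of the cyclic Nimhoff (GCN with every `S_i = ℕ₊`). -/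
theorem cyclic_nimhoff_grundy (n h : ℕ) (hh : 0 < h) (x : Fin n → ℕ) :
    gcnGrundy n h (fun _ => {s : ℕ | 0 < s}) x =
      (Finset.univ.fold (· ^^^ · : ℕ → ℕ → ℕ) 0 (fun i => x i / h)) * h + (∑ i, x i) % h := by
  rw [gcnGrundy]
  refine mex_eq _ _ ?_ ?_
  · rintro ⟨y, m, hy⟩
    have hrec : gcnGrundy n h (fun _ => {s : ℕ | 0 < s}) y = nimval h y :=
      cyclic_nimhoff_grundy n h hh y
    rw [hrec] at hy
    exact val_ne_of_move hh m (by rw [← hy]; rfl)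
  · intro g hg
    obtain ⟨y, m, hv⟩ := exists_move hh x g hg
    have hrec : gcnGrundy n h (fun _ => {s : ℕ | 0 < s}) y = nimval h y :=
      cyclic_nimhoff_grundy n h hh y
    exact ⟨y, m, by rw [hrec, hv]⟩
termination_by ∑ i, x i
decreasing_by all_goals exact gcnMove_sum_lt m
end

section
/- Suppose for each i the Grundy-value sequence G_{S_i} of the subtraction game Subtraction(S_i) is the h-stair of some sequence a_i, i.e. G_{S_i}(xh+r) = a_i(x)·h + r for all x ≥ 0 and 0 ≤ r < h. Then the Grundy value of a position (x_1,...,x_n) in the generalized cyclic Nimhoff GCN(h; S_1,...,S_n) equals (⊕_i ⌊G_{S_i}(x_i)/h⌋)·h + ((Σ_i x_i) mod h). -/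
open Finset

private lemma xid1 (u e w : ℕ) : w ^^^ e = (u ^^^ e) ^^^ u ^^^ w := by
  apply Nat.eq_of_testBit_eq; intro k
  simp only [Nat.testBit_xor]
  cases u.testBit k <;> cases e.testBit k <;> cases w.testBit k <;> simp

private lemma xid2 (B fa F fi : ℕ) : B ^^^ (fa ^^^ F) ^^^ fi = (B ^^^ fa) ^^^ F ^^^ fi := by
  apply Nat.eq_of_testBit_eq; intro k
  simp only [Nat.testBit_xor]
  cases B.testBit k <;> cases fa.testBit k <;> cases F.testBit k <;> cases fi.testBit k <;> simp

private lemma xid3 (B fa F : ℕ) : B ^^^ (fa ^^^ F) ^^^ fa = B ^^^ F := by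
  apply Nat.eq_of_testBit_eq; intro k
  simp only [Nat.testBit_xor]
  cases B.testBit k <;> cases fa.testBit k <;> cases F.testBit k <;> simp

private lemma xid5 {A u v : ℕ} (h : A ^^^ u ^^^ v = A) : v = u := by
  apply Nat.eq_of_testBit_eq; intro k
  have := congrArg (Nat.testBit · k) h
  simp only [Nat.testBit_xor] at this
  cases hA : A.testBit k <;> cases hu : u.testBit k <;> cases hv : v.testBit k <;>
    simp_all

private lemma xid6 (A u B : ℕ) : A ^^^ u ^^^ (B ^^^ A ^^^ u) = B := by
  apply Nat.eq_of_testBit_eq; intro k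
  simp only [Nat.testBit_xor]
  cases A.testBit k <;> cases u.testBit k <;> cases B.testBit k <;> simp

theorem foldXor_erase {ι : Type*} [DecidableEq ι] (s : Finset ι) (f : ι → ℕ)
    {i : ι} (hi : i ∈ s) :
    s.fold (· ^^^ · : ℕ → ℕ → ℕ) 0 f = f i ^^^ (s.erase i).fold (· ^^^ · : ℕ → ℕ → ℕ) 0 f := by
  conv_lhs => rw [← Finset.insert_erase hi]
  rw [Finset.fold_insert (Finset.notMem_erase i s)]

theorem foldXor_update {ι : Type*} [DecidableEq ι] (s : Finset ι) (f : ι → ℕ)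
    {i : ι} (hi : i ∈ s) (b : ℕ) :
    s.fold (· ^^^ · : ℕ → ℕ → ℕ) 0 (Function.update f i b)
      = s.fold (· ^^^ · : ℕ → ℕ → ℕ) 0 f ^^^ f i ^^^ b := by
  rw [foldXor_erase s f hi, foldXor_erase s (Function.update f i b) hi,
    Finset.fold_congr (g := f) (fun j hj => Function.update_of_ne (Finset.ne_of_mem_erase hj) _ _),
    Function.update_self]
  exact xid1 _ _ _

theorem foldXor_nim_step {ι : Type*} [DecidableEq ι] (s : Finset ι) (f : ι → ℕ)
    {B : ℕ} (hB : B < s.fold (· ^^^ · : ℕ → ℕ → ℕ) 0 f) :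
    ∃ i ∈ s, B ^^^ s.fold (· ^^^ · : ℕ → ℕ → ℕ) 0 f ^^^ f i < f i := by
  induction s using Finset.induction generalizing B with
  | empty => simp at hB
  | @insert a s ha ih =>
    rw [Finset.fold_insert ha] at hB ⊢
    rcases Nat.lt_xor_cases hB with h | h
    · exact ⟨a, Finset.mem_insert_self a s, by rw [xid3]; exact h⟩
    · obtain ⟨i, hi, hlt⟩ := ih h
      exact ⟨i, Finset.mem_insert_of_mem hi, by rw [xid2]; exact hlt⟩

theorem mex_eq_of {T : Set ℕ} {v : ℕ} (hv : v ∉ T) (hlt : ∀ k < v, k ∈ T) :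
    mex T = v := by
  refine le_antisymm (Nat.sInf_le hv) (le_csInf ⟨v, hv⟩ fun m hm => ?_)
  by_contra hlt2
  exact hm (hlt m (by omega))

theorem mem_of_lt_mex {T : Set ℕ} {k : ℕ} (hk : k < mex T) : k ∈ T := by
  by_contra hkT
  have : sInf Tᶜ ≤ k := Nat.sInf_le hkT
  unfold mex at hk; omega

theorem mex_not_mem {T : Set ℕ} (hfin : T.Finite) : mex T ∉ T := by
  have : Tᶜ.Nonempty := (Set.Finite.infinite_compl hfin).nonempty
  exact Nat.sInf_mem this

theorem exists_distrib {ι : Type*} [DecidableEq ι] (s : Finset ι) (f : ι → ℕ) :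
    ∀ m ≤ ∑ i ∈ s, f i, ∃ g : ι → ℕ, (∀ i, g i ≤ f i) ∧ ∑ i ∈ s, g i = m := by
  induction s using Finset.induction with
  | empty =>
    intro m hm
    simp only [Finset.sum_empty, Nat.le_zero] at hm
    exact ⟨fun _ => 0, fun i => Nat.zero_le _, by simp [hm]⟩
  | @insert a s ha ih =>
    intro m hm
    rw [Finset.sum_insert ha] at hm
    obtain ⟨g, hg, hsum⟩ := ih (m - min m (f a)) (by omega)
    refine ⟨Function.update g a (min m (f a)), fun i => ?_, ?_⟩
    · by_cases hi : i = a
      · subst hi; simp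
      · rw [Function.update_of_ne hi]; exact hg i
    · rw [Finset.sum_insert ha, Function.update_self]
      have he : ∑ x ∈ s, Function.update g a (min m (f a)) x = ∑ x ∈ s, g x :=
        Finset.sum_congr rfl (fun j hj => Function.update_of_ne (by rintro rfl; exact ha hj) _ _)
      rw [he, hsum]; omega

theorem qh_div_mod {h q r : ℕ} (hh : 0 < h) (hr : r < h) :
    (q * h + r) / h = q ∧ (q * h + r) % h = r := by
  constructor
  · rw [Nat.add_comm, Nat.add_mul_div_right _ _ hh, Nat.div_eq_of_lt hr]; omega
  · rw [Nat.add_comm, Nat.add_mul_mod_self_right, Nat.mod_eq_of_lt hr]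

theorem mulh_add_inj {h q1 r1 q2 r2 : ℕ} (h1 : r1 < h) (h2 : r2 < h)
    (he : q1 * h + r1 = q2 * h + r2) : q1 = q2 ∧ r1 = r2 := by
  have hh : 0 < h := by omega
  have d1 := (qh_div_mod hh h1 (q := q1)).1
  have d2 := (qh_div_mod hh h2 (q := q2)).1
  have hq : q1 = q2 := by rw [← d1, ← d2, he]
  refine ⟨hq, ?_⟩
  rw [hq] at he; omega

theorem dvd_of_sub_mod_eq {T s h : ℕ} (hh : 0 < h) (hs : s ≤ T)
    (he : (T - s) % h = T % h) : h ∣ s := by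
  have : T - s ≡ T [MOD h] := he
  have := (Nat.modEq_iff_dvd' (Nat.sub_le T s)).mp this
  rwa [Nat.sub_sub_self hs] at this

theorem sub_mod_eq_of_dvd {x s h : ℕ} (hs : s ≤ x) (hd : h ∣ s) :
    (x - s) % h = x % h := by
  have : x - s ≡ x [MOD h] := (Nat.modEq_iff_dvd' (Nat.sub_le x s)).mpr
    (by rwa [Nat.sub_sub_self hs])
  exact this

theorem subG_eq (S : Set ℕ) (x : ℕ) :
    subG S x = mex {g | ∃ s, ∃ _ : s ∈ S ∧ 0 < s ∧ s ≤ x, g = subG S (x - s)} := by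
  rw [subG]

theorem subT_finite (S : Set ℕ) (x : ℕ) :
    Set.Finite {g | ∃ s, ∃ _ : s ∈ S ∧ 0 < s ∧ s ≤ x, g = subG S (x - s)} := by
  apply Set.Finite.subset ((Set.finite_Iio x).image (subG S))
  rintro g ⟨s, ⟨hs, h0, hx⟩, rfl⟩
  exact ⟨x - s, Set.mem_Iio.mpr (by omega), rfl⟩

theorem subG_move_ne {S : Set ℕ} {x s : ℕ} (hs : s ∈ S) (h0 : 0 < s) (hx : s ≤ x) :
    subG S (x - s) ≠ subG S x := by
  intro he
  have := mex_not_mem (subT_finite S x)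
  rw [← subG_eq] at this
  exact this ⟨s, ⟨hs, h0, hx⟩, he.symm⟩

theorem subG_lt_exists {S : Set ℕ} {x g : ℕ} (hg : g < subG S x) :
    ∃ s, s ∈ S ∧ 0 < s ∧ s ≤ x ∧ subG S (x - s) = g := by
  rw [subG_eq] at hg
  obtain ⟨s, ⟨hs, h0, hx⟩, he⟩ := mem_of_lt_mex hg
  exact ⟨s, hs, h0, hx, he.symm⟩

/-- Grundy value of the generalized cyclic Nimhoff when each
subtraction game has an `h`-stair Grundy sequence. -/
theorem generalized_cyclic_nimhoff_grundy (n h : ℕ) (hh : 0 < h)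
    (S : Fin n → Set ℕ) (hS : ∀ i, ∀ s ∈ S i, 0 < s) (a : Fin n → ℕ → ℕ)
    (hstair : ∀ i x r, r < h → subG (S i) (x * h + r) = a i x * h + r)
    (x : Fin n → ℕ) :
    gcnGrundy n h S x =
      (Finset.univ.fold (· ^^^ · : ℕ → ℕ → ℕ) 0 (fun i => subG (S i) (x i) / h)) * h +
        (∑ i, x i) % h := by
  -- stair decomposition of subtraction Grundy values
  have st : ∀ i z, subG (S i) z = a i (z / h) * h + z % h := by
    intro i z
    conv_lhs => rw [show z = (z / h) * h + z % h by
      rw [Nat.mul_comm]; exact (Nat.div_add_mod z h).symm]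
    exact hstair i (z / h) (z % h) (Nat.mod_lt _ hh)
  have stdiv : ∀ i z, subG (S i) z / h = a i (z / h) := by
    intro i z
    rw [st i z]
    exact (qh_div_mod hh (Nat.mod_lt _ hh)).1
  have stdec : ∀ i z, subG (S i) z = (subG (S i) z / h) * h + z % h := by
    intro i z
    rw [stdiv i z]; exact st i z
  set F : (Fin n → ℕ) → ℕ := fun w =>
    (Finset.univ.fold (· ^^^ · : ℕ → ℕ → ℕ) 0 (fun i => subG (S i) (w i) / h)) * h +
      (∑ i, w i) % h with hF
  have hFdef : ∀ w, F w =
      (Finset.univ.fold (· ^^^ · : ℕ → ℕ → ℕ) 0 (fun i => subG (S i) (w i) / h)) * h +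
        (∑ i, w i) % h := fun w => rfl
  -- Step A: no move preserves F
  have stepA : ∀ w y, gcnMove h S w y → F y ≠ F w := by
    intro w y m hFeq
    rw [hFdef y, hFdef w] at hFeq
    obtain ⟨hA, hR⟩ := mulh_add_inj (Nat.mod_lt _ hh) (Nat.mod_lt _ hh) hFeq
    rcases m with ⟨i, s, hs, h0, hsx, rfl⟩ | ⟨s, hle, hpos, hlth, rfl⟩
    · -- single-heap move
      have hsumy : ∑ j, Function.update w i (w i - s) j = (∑ j, w j) - s := by
        rw [Finset.sum_update_of_mem (Finset.mem_univ i), ← Finset.erase_eq]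
        have := Finset.add_sum_erase Finset.univ w (Finset.mem_univ i)
        omega
      have hfun : (fun j => subG (S j) (Function.update w i (w i - s) j) / h)
          = Function.update (fun j => subG (S j) (w j) / h) i (subG (S i) (w i - s) / h) := by
        funext j
        by_cases hj : j = i
        · subst hj; rw [Function.update_self, Function.update_self]
        · rw [Function.update_of_ne hj, Function.update_of_ne hj]
      rw [hfun, foldXor_update _ _ (Finset.mem_univ i)] at hA
      have hv : subG (S i) (w i - s) / h = subG (S i) (w i) / h := xid5 hA
      rw [hsumy] at hR
      have hwile : w i ≤ ∑ j, w j := Finset.single_le_sum (fun j _ => Nat.zero_le _)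
        (Finset.mem_univ i)
      have hdvd : h ∣ s := dvd_of_sub_mod_eq hh (le_trans hsx hwile) hR
      have hmod : (w i - s) % h = w i % h := sub_mod_eq_of_dvd hsx hdvd
      have : subG (S i) (w i - s) = subG (S i) (w i) := by
        rw [stdec i (w i - s), stdec i (w i), hv, hmod]
      exact subG_move_ne hs h0 hsx this
    · -- cyclic move
      have hsum : ∑ j, (w j - s j) + ∑ j, s j = ∑ j, w j := by
        rw [← Finset.sum_add_distrib]
        exact Finset.sum_congr rfl fun j _ => by have := hle j; omega
      have hR' : (∑ j, (w j - s j)) % h = (∑ j, w j) % h := hR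
      have hsub : (∑ j, (w j - s j)) = (∑ j, w j) - ∑ j, s j := by omega
      rw [hsub] at hR'
      have hdvd : h ∣ ∑ j, s j := dvd_of_sub_mod_eq hh (by omega) hR'
      have := Nat.le_of_dvd hpos hdvd
      omega
  -- Step B: every smaller value is reached by a move
  have stepB : ∀ w g, g < F w → ∃ y, gcnMove h S w y ∧ F y = g := by
    intro w g hg
    rw [hFdef w] at hg
    set fq : Fin n → ℕ := fun i => subG (S i) (w i) / h with hfq
    set A : ℕ := Finset.univ.fold (· ^^^ · : ℕ → ℕ → ℕ) 0 fq with hAdef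
    set R : ℕ := (∑ i, w i) % h with hRdef
    have hRlt : R < h := Nat.mod_lt _ hh
    have hgd : g = (g / h) * h + g % h := by
      rw [Nat.mul_comm]; exact (Nat.div_add_mod g h).symm
    set B : ℕ := g / h with hBdef
    set t : ℕ := g % h with htdef
    have htlt : t < h := Nat.mod_lt _ hh
    have hBA : B ≤ A := by
      by_contra hc
      have h1 : (A + 1) * h ≤ B * h := Nat.mul_le_mul_right _ (by omega)
      have h2 : (A + 1) * h = A * h + h := by ring
      omega
    rcases Nat.eq_or_lt_of_le hBA with hBA' | hBA'
    · -- B = A : cyclic move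
      have htR : t < R := by rw [hBA'] at hgd; omega
      have hsr : R ≤ ∑ i, w i % h := by
        have h1 : (∑ i, w i) % h = (∑ i, w i % h) % h := Finset.sum_nat_mod _ _ _
        have h2 : (∑ i, w i % h) % h ≤ ∑ i, w i % h := Nat.mod_le _ _
        omega
      obtain ⟨s, hsle0, hssum⟩ := exists_distrib Finset.univ (fun i => w i % h) (R - t)
        (show R - t ≤ ∑ i, w i % h by omega)
      have hsle : ∀ i, s i ≤ w i % h := hsle0
      refine ⟨fun i => w i - s i,
        Or.inr ⟨s, fun i => le_trans (hsle i) (Nat.mod_le _ _),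
          by omega, by omega, rfl⟩, ?_⟩
      rw [hFdef]
      show (Finset.univ.fold (· ^^^ · : ℕ → ℕ → ℕ) 0
          (fun i => subG (S i) (w i - s i) / h)) * h + (∑ i, (w i - s i)) % h = g
      have hdm : ∀ i, (w i - s i) / h = w i / h ∧ (w i - s i) % h = w i % h - s i := by
        intro i
        have h1 : w i = (w i / h) * h + w i % h := by
          rw [Nat.mul_comm]; exact (Nat.div_add_mod _ _).symm
        have h2 : w i - s i = (w i / h) * h + (w i % h - s i) := by
          have := hsle i; omega
        have h3 : w i % h - s i < h := by
          have := Nat.mod_lt (w i) hh; omega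
        rw [h2]
        exact qh_div_mod hh h3
      have hfold : Finset.univ.fold (· ^^^ · : ℕ → ℕ → ℕ) 0
          (fun i => subG (S i) (w i - s i) / h) = A := by
        rw [hAdef]
        refine Finset.fold_congr fun i _ => ?_
        show subG (S i) (w i - s i) / h = subG (S i) (w i) / h
        rw [stdiv, stdiv, (hdm i).1]
      have hsum : ∑ j, (w j - s j) + ∑ j, s j = ∑ j, w j := by
        rw [← Finset.sum_add_distrib]
        exact Finset.sum_congr rfl fun j _ =>
          by have := le_trans (hsle j) (Nat.mod_le (w j) h); omega
      have hsumw : ∑ j, w j = (∑ j, w j) / h * h + R := by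
        rw [Nat.mul_comm]; exact (Nat.div_add_mod _ _).symm
      have hsub : (∑ j, (w j - s j)) = (∑ j, w j) / h * h + t := by omega
      have hmodt : (∑ j, (w j - s j)) % h = t := by
        rw [hsub]; exact (qh_div_mod hh htlt).2
      rw [hfold, hmodt, ← hBA']
      exact hgd.symm
    · -- B < A : single-heap move
      obtain ⟨i, _, hlt⟩ := foldXor_nim_step Finset.univ fq (hAdef ▸ hBA')
      rw [← hAdef] at hlt
      set b : ℕ := B ^^^ A ^^^ fq i with hbdef
      set r' : ℕ := (w i % h + t + (h - R)) % h with hr'def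
      have hr'lt : r' < h := Nat.mod_lt _ hh
      have hgi : b * h + r' < subG (S i) (w i) := by
        have hdec : subG (S i) (w i) = fq i * h + w i % h := stdec i (w i)
        have h1 : (b + 1) * h ≤ fq i * h := Nat.mul_le_mul_right _ (by omega)
        have h2 : (b + 1) * h = b * h + h := by ring
        omega
      obtain ⟨s, hs, h0, hsx, hsub⟩ := subG_lt_exists hgi
      have hdec2 : (subG (S i) (w i - s) / h) * h + (w i - s) % h = b * h + r' := by
        rw [← stdec i (w i - s)]; exact hsub
      obtain ⟨hdivb, hmodr⟩ := mulh_add_inj (Nat.mod_lt _ hh) hr'lt hdec2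
      refine ⟨Function.update w i (w i - s), Or.inl ⟨i, s, hs, h0, hsx, rfl⟩, ?_⟩
      rw [hFdef]
      have hfun : (fun j => subG (S j) (Function.update w i (w i - s) j) / h)
          = Function.update fq i b := by
        funext j
        by_cases hj : j = i
        · subst hj; rw [Function.update_self, Function.update_self]; exact hdivb
        · rw [Function.update_of_ne hj, Function.update_of_ne hj]
      have hsumy : ∑ j, Function.update w i (w i - s) j = (∑ j, w j) - s := by
        rw [Finset.sum_update_of_mem (Finset.mem_univ i), ← Finset.erase_eq]
        have := Finset.add_sum_erase Finset.univ w (Finset.mem_univ i)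
        omega
      have hW : ∑ j, w j = w i + ∑ j ∈ Finset.univ.erase i, w j :=
        (Finset.add_sum_erase Finset.univ w (Finset.mem_univ i)).symm
      set W : ℕ := ∑ j ∈ Finset.univ.erase i, w j with hWdef
      have hmodt : ((∑ j, w j) - s) % h = t := by
        calc ((∑ j, w j) - s) % h = ((w i - s) + W) % h := by
              rw [show (∑ j, w j) - s = (w i - s) + W by omega]
          _ = ((w i - s) % h + W) % h := (Nat.mod_add_mod _ _ _).symm
          _ = ((w i % h + t + (h - R)) % h + W) % h := by rw [hmodr, hr'def]
          _ = ((w i % h + t + (h - R)) + W) % h := Nat.mod_add_mod _ _ _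
          _ = ((w i % h + W) + (t + (h - R))) % h := by ring_nf
          _ = ((w i + W) % h + (t + (h - R))) % h := by
              have h1 : (w i % h + W + (t + (h - R))) ≡ (w i + W + (t + (h - R))) [MOD h] :=
                ((Nat.mod_modEq (w i) h).add_right W).add_right _
              have h2 : ((w i + W) % h + (t + (h - R))) ≡ (w i + W + (t + (h - R))) [MOD h] :=
                (Nat.mod_modEq (w i + W) h).add_right _
              exact h1.trans h2.symm
          _ = (R + (t + (h - R))) % h := by rw [← hW, ← hRdef]
          _ = (t + h) % h := by rw [show R + (t + (h - R)) = t + h by omega]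
          _ = t := by rw [Nat.add_mod_right]; exact Nat.mod_eq_of_lt htlt
      rw [hfun, foldXor_update _ _ (Finset.mem_univ i), hsumy, hmodt, ← hAdef,
        hbdef, xid6]
      exact hgd.symm
  -- strong induction on the total number of tokens
  suffices H : ∀ N z, (∑ i, z i) = N → gcnGrundy n h S z = F z from H _ x rfl
  intro N
  induction N using Nat.strong_induction_on with
  | _ N ih =>
    intro z hzN
    have ihF : ∀ y, gcnMove h S z y → gcnGrundy n h S y = F y := fun y m =>
      ih (∑ i, y i) (hzN ▸ gcnMove_sum_lt m) y rfl
    rw [gcnGrundy]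
    apply mex_eq_of
    · rintro ⟨y, m, he⟩
      exact stepA z y m (by rw [← ihF y m, ← he])
    · intro k hk
      obtain ⟨y, m, hFy⟩ := stepB z k hk
      exact ⟨y, m, by rw [ihF y m, hFy]⟩
end

section
/- Let l ≥ 1 and suppose S is a set of positive integers with {1,...,l-1} ⊆ S ⊆ ℕ₊ \ { k·l : k ∈ ℕ₊ }. Then the Grundy value of Subtraction(S) on a heap of size x is G_S(x) = x mod l. -/
open Finset

/-- if `{1,...,l-1} ⊆ S ⊆ ℕ₊ \ {k·l : k ∈ ℕ₊}` then
`G_S(x) = x mod l`. -/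
theorem subG_mod (l : ℕ) (hl : 1 ≤ l) (S : Set ℕ)
    (hsub : ∀ s : ℕ, 0 < s → s < l → s ∈ S)
    (hsup : ∀ s ∈ S, 0 < s ∧ ¬∃ k : ℕ, 0 < k ∧ s = k * l)
    (x : ℕ) : subG S x = x % l := by
  induction x using Nat.strong_induction_on with
  | _ x ih =>
  rw [subG]
  set T : Set ℕ := {g | ∃ s, ∃ _ : s ∈ S ∧ 0 < s ∧ s ≤ x, g = subG S (x - s)} with hTdef
  have hnot : x % l ∉ T := by
    rintro ⟨s, ⟨hs, h0, hsx⟩, heq⟩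
    rw [ih _ (by omega)] at heq
    -- heq : x % l = (x - s) % l
    have hmod : s % l = 0 := by
      have h1 : (x - s + s) % l = (x - s + 0) % l := by
        rw [Nat.sub_add_cancel hsx, Nat.add_zero, heq]
      have := (Nat.ModEq.add_left_cancel' (x - s) h1.symm)
      simpa [Nat.ModEq, Nat.mod_self] using this.symm
    obtain ⟨-, hk⟩ := hsup s hs
    obtain ⟨k, rfl⟩ := Nat.dvd_of_mod_eq_zero hmod
    have hkpos : 0 < k := by
      rcases Nat.eq_zero_or_pos k with h | h
      · simp [h] at h0
      · exact h
    exact hk ⟨k, hkpos, Nat.mul_comm l k⟩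
  have hlt : x % l < l := Nat.mod_lt _ (by omega)
  have hmem : ∀ r, r < x % l → r ∈ T := by
    intro r hr
    set s := x % l - r with hsdef
    have hsS : s ∈ S := hsub s (by omega) (by omega)
    have hsx : s ≤ x := le_trans (by omega) (Nat.mod_le x l)
    refine ⟨s, ⟨hsS, by omega, hsx⟩, ?_⟩
    rw [ih _ (by omega)]
    have hx : x - s = l * (x / l) + r := by
      have := Nat.div_add_mod x l
      omega
    rw [hx, Nat.mul_add_mod, Nat.mod_eq_of_lt (by omega)]
  show mex T = x % l
  unfold mex
  refine le_antisymm (Nat.sInf_le hnot) ?_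
  by_contra h
  push_neg at h
  have hmem' : sInf Tᶜ ∈ Tᶜ := Nat.sInf_mem ⟨_, hnot⟩
  exact hmem' (hmem _ h)
end

section
/- Let l ≥ 1, let h divide l, and suppose {1,...,l-1} ⊆ S ⊆ ℕ₊ \ { k·l : k ∈ ℕ₊ }. Then the Grundy sequence of Subtraction(S) is the h-stair of the sequence a(x) = ⌊(x·h mod l)/h⌋, i.e. G_S(x) = ⌊(x mod l)/h⌋·h + ((x mod l) mod h) for all x. -/
open Finset

/-- with moreover `h ∣ l`, the Grundy sequence of `Subtraction(S)`
is the `h`-stair of `a(x) = ⌊(x·h mod l)/h⌋`. -/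
theorem subG_mod_stair (l h : ℕ) (hl : 1 ≤ l) (hh : 0 < h) (hdvd : h ∣ l)
    (S : Set ℕ)
    (hsub : ∀ s : ℕ, 0 < s → s < l → s ∈ S)
    (hsup : ∀ s ∈ S, 0 < s ∧ ¬∃ k : ℕ, 0 < k ∧ s = k * l)
    (x : ℕ) : subG S x = (x % l) / h * h + (x % l) % h := by
  have key : ∀ x, subG S x = x % l := by
    intro x
    induction x using Nat.strong_induction_on with
    | _ x ih =>
      rw [subG]
      set T : Set ℕ := {g | ∃ s, ∃ _ : s ∈ S ∧ 0 < s ∧ s ≤ x, g = subG S (x - s)}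
        with hT
      have hxl : x % l < l := Nat.mod_lt _ (by omega)
      have hxle : x % l ≤ x := Nat.mod_le _ _
      have hnotin : x % l ∉ T := by
        rintro ⟨s, ⟨hsS, hs0, hsx⟩, hg⟩
        rw [ih (x - s) (by omega)] at hg
        have hmeq : (x - s) ≡ x [MOD l] := (hg.symm : (x - s) % l = x % l)
        have hdvd : l ∣ s := by
          have := (Nat.modEq_iff_dvd' (by omega : x - s ≤ x)).mp hmeq
          have hxx : x - (x - s) = s := by omega
          rwa [hxx] at this
        obtain ⟨k, hk⟩ := hdvd
        have hk0 : 0 < k := by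
          rcases Nat.eq_zero_or_pos k with h0 | h0
          · subst h0; omega
          · exact h0
        exact (hsup s hsS).2 ⟨k, hk0, by rw [hk, Nat.mul_comm]⟩
      have hmem : ∀ v < x % l, v ∈ T := by
        intro v hv
        refine ⟨x % l - v, ⟨hsub _ (by omega) (by omega), by omega, by omega⟩, ?_⟩
        rw [ih (x - (x % l - v)) (by omega)]
        have hx : x - (x % l - v) = l * (x / l) + v := by
          have := Nat.div_add_mod x l
          omega
        rw [hx, Nat.mul_add_mod, Nat.mod_eq_of_lt (by omega)]
      show mex T = x % l
      unfold mex
      apply le_antisymm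
      · exact Nat.sInf_le hnotin
      · by_contra hlt
        push_neg at hlt
        have hne : Tᶜ.Nonempty := ⟨x % l, hnotin⟩
        have := Nat.sInf_mem hne
        exact this (hmem _ hlt)
  rw [key, Nat.div_add_mod']
end

section
/- Fix positive integers h and k, and let S = ℕ₊ \ {h, 2h, ..., kh}. Then the Grundy sequence of Subtraction(S) is the h-stair of the sequence a(x) = ⌊x/(k+1)⌋; explicitly, G_S(qh + r) = ⌊q/(k+1)⌋·h + r for all q ≥ 0 and 0 ≤ r < h. -/
open Finset

lemma mex_eq_of_s6 {T : Set ℕ} {v : ℕ} (h1 : v ∉ T) (h2 : ∀ g < v, g ∈ T) :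
    mex T = v := by
  unfold mex
  refine le_antisymm (Nat.sInf_le h1) ?_
  by_contra hlt
  push_neg at hlt
  have hne : (Tᶜ : Set ℕ).Nonempty := ⟨v, h1⟩
  exact (Nat.sInf_mem hne) (h2 _ hlt)

lemma stair_inj {h : ℕ} (hh : 0 < h) {a b r r' : ℕ} (hr : r < h) (hr' : r' < h)
    (e : a * h + r = b * h + r') : a = b ∧ r = r' := by
  have h1 : r = r' := by
    have h0 : (a * h + r) % h = (b * h + r') % h := by rw [e]
    rwa [Nat.mul_add_mod', Nat.mul_add_mod', Nat.mod_eq_of_lt hr,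
      Nat.mod_eq_of_lt hr'] at h0
  subst h1
  exact ⟨Nat.eq_of_mul_eq_mul_right hh (Nat.add_right_cancel e), rfl⟩

lemma f_eval {h : ℕ} (hh : 0 < h) (q r : ℕ) (hr : r < h) :
    (q * h + r) / h = q ∧ (q * h + r) % h = r := by
  constructor
  · rw [add_comm, mul_comm, Nat.add_mul_div_left _ _ hh, Nat.div_eq_of_lt hr,
      zero_add]
  · rw [add_comm, mul_comm, Nat.add_mul_mod_self_left, Nat.mod_eq_of_lt hr]

lemma subG_eq_s6 (h k : ℕ) (hh : 0 < h) (hk : 0 < k) (x : ℕ) :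
    subG {s : ℕ | 0 < s ∧ ¬∃ m : ℕ, 1 ≤ m ∧ m ≤ k ∧ s = m * h} x =
      x / h / (k + 1) * h + x % h := by
  induction x using Nat.strong_induction_on with
  | _ x ih =>
  set S : Set ℕ := {s : ℕ | 0 < s ∧ ¬∃ m : ℕ, 1 ≤ m ∧ m ≤ k ∧ s = m * h}
    with hSdef
  rw [subG]
  obtain ⟨q, r, hr, hx⟩ : ∃ q r, r < h ∧ x = q * h + r :=
    ⟨x / h, x % h, Nat.mod_lt _ hh, by rw [mul_comm]; exact (Nat.div_add_mod x h).symm⟩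
  have hd0 : x / h = q ∧ x % h = r := by rw [hx]; exact f_eval hh q r hr
  rw [hd0.1, hd0.2]
  apply mex_eq_of_s6
  · rintro ⟨s, ⟨⟨-, hsnm⟩, hs0, hsx⟩, heq⟩
    have hxs : x - s < x := by omega
    rw [ih _ hxs] at heq
    obtain ⟨q', r', hr', hxe⟩ : ∃ q' r', r' < h ∧ x - s = q' * h + r' :=
      ⟨(x - s) / h, (x - s) % h, Nat.mod_lt _ hh,
        by rw [mul_comm]; exact (Nat.div_add_mod _ h).symm⟩
    have hd : (x - s) / h = q' ∧ (x - s) % h = r' := by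
      rw [hxe]; exact f_eval hh _ _ hr'
    rw [hd.1, hd.2] at heq
    obtain ⟨hQ, hrr⟩ := stair_inj hh hr hr' heq
    have e3 : (x - s) + s = x := Nat.sub_add_cancel hsx
    rw [hxe, hx, ← hrr] at e3
    have e2 : q' * h + s = q * h := by linarith
    have hq'q : q' ≤ q := by
      by_contra hc
      push_neg at hc
      have := (Nat.mul_lt_mul_right hh).mpr hc
      linarith
    have hms : (q - q') * h = s := by
      rw [tsub_mul]
      exact Nat.sub_eq_of_eq_add (by linarith)
    have hm1 : 1 ≤ q - q' := by
      rcases Nat.eq_zero_or_pos (q - q') with h0 | h0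
      · rw [h0, zero_mul] at hms; omega
      · exact h0
    have hmk : ¬(q - q' ≤ k) := fun hc => hsnm ⟨q - q', hm1, hc, hms.symm⟩
    have hqle : q' + (k + 1) ≤ q := by omega
    have hfin : q' / (k + 1) + 1 ≤ q / (k + 1) := by
      calc q' / (k + 1) + 1 = (q' + (k + 1)) / (k + 1) :=
            (Nat.add_div_right q' (by omega)).symm
        _ ≤ q / (k + 1) := Nat.div_le_div_right hqle
    rw [hQ] at hfin
    exact Nat.not_succ_le_self _ hfin
  · intro g hg
    obtain ⟨p, u, hu, hgpu⟩ : ∃ p u, u < h ∧ g = p * h + u :=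
      ⟨g / h, g % h, Nat.mod_lt _ hh,
        by rw [mul_comm]; exact (Nat.div_add_mod _ h).symm⟩
    rcases lt_or_ge p (q / (k + 1)) with hp | hp
    · -- p < Q : subtract a big amount
      set q' := p * (k + 1) with hq'
      have hq'le : q' + (k + 1) ≤ q := by
        have h1 : (p + 1) * (k + 1) ≤ (q / (k + 1)) * (k + 1) :=
          Nat.mul_le_mul_right _ hp
        have h2 : q / (k + 1) * (k + 1) ≤ q := Nat.div_mul_le_self q (k + 1)
        have h3 : (p + 1) * (k + 1) = q' + (k + 1) := by rw [add_one_mul]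
        linarith
      have hlt : q' * h + u < x := by
        have h1 : (q' + 1) * h ≤ q * h := Nat.mul_le_mul_right _ (by omega)
        have h2 : (q' + 1) * h = q' * h + h := add_one_mul _ _
        linarith
      refine ⟨x - (q' * h + u),
        ⟨⟨Nat.sub_pos_of_lt hlt, ?_⟩, Nat.sub_pos_of_lt hlt, Nat.sub_le _ _⟩, ?_⟩
      · rintro ⟨m, hm1, hm2, hm3⟩
        have hca : x - (q' * h + u) + (q' * h + u) = x :=
          Nat.sub_add_cancel hlt.le
        rw [hm3] at hca
        have e : (m + q') * h + u = q * h + r := by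
          rw [add_mul]; rw [hx] at hca; linarith
        obtain ⟨hmq, -⟩ := stair_inj hh hu hr e
        omega
      · have hxs : x - (x - (q' * h + u)) = q' * h + u :=
          Nat.sub_sub_self hlt.le
        rw [hxs, ih _ hlt]
        have hd := f_eval hh q' u hu
        rw [hd.1, hd.2, hq', Nat.mul_div_cancel _ (by omega : 0 < k + 1)]
        exact hgpu
    · -- p ≥ Q : then p = Q and u < r
      have hpQ : p = q / (k + 1) := by
        by_contra hne
        have h1 : q / (k + 1) + 1 ≤ p := by omega
        have h2 : (q / (k + 1) + 1) * h ≤ p * h := Nat.mul_le_mul_right _ h1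
        have h3 : (q / (k + 1) + 1) * h = q / (k + 1) * h + h := add_one_mul _ _
        linarith
      have hur : u < r := by rw [hpQ] at hgpu; linarith
      have hrx : r ≤ x := le_trans (Nat.le_add_left r (q * h)) (le_of_eq hx.symm)
      refine ⟨r - u, ⟨⟨by omega, ?_⟩, by omega, by omega⟩, ?_⟩
      · rintro ⟨m, hm1, hm2, hm3⟩
        have hmh : h ≤ m * h := Nat.le_mul_of_pos_left h hm1
        rw [← hm3] at hmh; omega
      · have hxs : x - (r - u) = q * h + u := by
          rw [hx, Nat.add_sub_assoc (show r - u ≤ r by omega)]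
          congr 1; omega
        have hlt2 : q * h + u < x := by
          rw [hx]; exact Nat.add_lt_add_left hur _
        rw [hxs, ih _ hlt2]
        have hd := f_eval hh q u hu
        rw [hd.1, hd.2, ← hpQ]
        exact hgpu
/-- the Grundy sequence of All-but({h, 2h, ..., kh}) is the
`h`-stair of `a(x) = ⌊x/(k+1)⌋`. -/
theorem allbut_multiples_grundy (h k : ℕ) (hh : 0 < h) (hk : 0 < k)
    (q r : ℕ) (hr : r < h) :
    subG {s : ℕ | 0 < s ∧ ¬∃ m : ℕ, 1 ≤ m ∧ m ≤ k ∧ s = m * h} (q * h + r) =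
      q / (k + 1) * h + r := by
  have := subG_eq_s6 h k hh hk (q * h + r)
  rwa [(f_eval hh q r hr).1, (f_eval hh q r hr).2] at this
end

section
/- Let h ≥ 1, and for each i = 1,...,n let q_i, r_i be nonnegative integers with r_i < h. Let Q = ⊕_i a_i(q_i) for given sequences a_i, and R = (Σ_i r_i) mod h. For any k' with 0 ≤ k' < R, there exist nonnegative integers k_1,...,k_n with k_i ≤ r_i for all i, and 0 < Σ_i k_i < h, such that (Σ_i (r_i - k_i)) mod h = k'. -/
open Finset

lemma exists_pointwise_le : ∀ (n : ℕ) (r : Fin n → ℕ) (m : ℕ), m ≤ ∑ i, r i →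
    ∃ k : Fin n → ℕ, (∀ i, k i ≤ r i) ∧ ∑ i, k i = m := by
  intro n
  induction n with
  | zero =>
    intro r m hm
    exact ⟨fun i => 0, fun i => i.elim0, by simpa using hm.antisymm' (by simp)⟩
  | succ n ih =>
    intro r m hm
    rw [Fin.sum_univ_succ] at hm
    obtain ⟨k, hk1, hk2⟩ := ih (fun i => r i.succ) (m - min m (r 0))
      (by show m - min m (r 0) ≤ ∑ i : Fin n, r i.succ; omega)
    refine ⟨Fin.cons (min m (r 0)) k, ?_, ?_⟩
    · intro i
      refine Fin.cases ?_ ?_ i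
      · simp
      · intro j; simpa using hk1 j
    · rw [Fin.sum_univ_succ]
      simp only [Fin.cons_zero, Fin.cons_succ]
      omega

/-- combinatorial lemma: one can remove `k_i ≤ r_i` tokens with
`0 < Σ k_i < h` to realize any residue `k' < (Σ r_i) mod h`. -/
theorem cyclic_move_exists (n h : ℕ) (hh : 0 < h) (r : Fin n → ℕ)
    (hr : ∀ i, r i < h) (k' : ℕ) (hk : k' < (∑ i, r i) % h) :
    ∃ k : Fin n → ℕ, (∀ i, k i ≤ r i) ∧ 0 < ∑ i, k i ∧ ∑ i, k i < h ∧
      (∑ i, (r i - k i)) % h = k' := by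
  set R := (∑ i, r i) % h with hR
  have hRh : R < h := Nat.mod_lt _ hh
  have hRle : R ≤ ∑ i, r i := Nat.mod_le _ _
  obtain ⟨k, hk1, hk2⟩ := exists_pointwise_le n r (R - k') (by omega)
  refine ⟨k, hk1, by omega, by omega, ?_⟩
  have hsum : ∑ i, (r i - k i) + ∑ i, k i = ∑ i, r i := by
    rw [← Finset.sum_add_distrib]
    exact Finset.sum_congr rfl fun i _ => by have := hk1 i; omega
  have hdm := Nat.div_add_mod (∑ i, r i) h
  have : ∑ i, (r i - k i) = h * ((∑ i, r i) / h) + k' := by omega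
  rw [this, Nat.mul_add_mod, Nat.mod_eq_of_lt (by omega)]
end

section
/- Let m_1, ..., m_n be nonnegative integers with nim-sum Q = m_1 ⊕ ... ⊕ m_n, and let Q' < Q. Then there exists an index j and a value g < m_j such that Q' = m_1 ⊕ ... ⊕ m_{j-1} ⊕ g ⊕ m_{j+1} ⊕ ... ⊕ m_n. -/
open Finset

lemma fold_xor_eq_of_mem {ι : Type*} [DecidableEq ι] (s : Finset ι) (m : ι → ℕ) {j : ι}
    (hj : j ∈ s) :
    s.fold (· ^^^ · : ℕ → ℕ → ℕ) 0 m = m j ^^^ (s.erase j).fold (· ^^^ · : ℕ → ℕ → ℕ) 0 m := by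
  conv_lhs => rw [← Finset.insert_erase hj]
  exact Finset.fold_insert (Finset.notMem_erase j s)

lemma exists_testBit_of_fold {ι : Type*} [DecidableEq ι] (s : Finset ι) (m : ι → ℕ) (k : ℕ)
    (h : Nat.testBit (s.fold (· ^^^ · : ℕ → ℕ → ℕ) 0 m) k = true) :
    ∃ j ∈ s, Nat.testBit (m j) k = true := by
  induction s using Finset.induction with
  | empty => simp [Nat.testBit] at h
  | @insert a t hx ih =>
    rw [Finset.fold_insert hx, Nat.testBit_xor] at h
    by_cases ha : Nat.testBit (m a) k = true
    · exact ⟨a, Finset.mem_insert_self _ _, ha⟩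
    · rw [Bool.eq_false_iff.mpr ha, Bool.false_xor] at h
      obtain ⟨j, hj, hjt⟩ := ih h
      exact ⟨j, Finset.mem_insert_of_mem hj, hjt⟩

/-- any value below the nim-sum is reached by lowering a single
component. -/
theorem nim_sum_lower (n : ℕ) (m : Fin n → ℕ) (Q' : ℕ)
    (hQ : Q' < Finset.univ.fold (· ^^^ · : ℕ → ℕ → ℕ) 0 m) :
    ∃ j : Fin n, ∃ g : ℕ, g < m j ∧
      Q' = Finset.univ.fold (· ^^^ · : ℕ → ℕ → ℕ) 0 (Function.update m j g) := by
  set Q := Finset.univ.fold (· ^^^ · : ℕ → ℕ → ℕ) 0 m with hQdef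
  have hd : Q ^^^ Q' ≠ 0 := fun h => by
    have := xor_eq_zero_iff.mp h; omega
  obtain ⟨k, hk, hk'⟩ := Nat.exists_most_significant_bit hd
  rw [Nat.testBit_xor] at hk
  have hQk : Nat.testBit Q k = true := by
    by_contra hF
    have hF' := Bool.eq_false_iff.mpr hF
    have h1 : Nat.testBit Q' k = true := by
      rw [hF', Bool.false_xor] at hk; exact hk
    have : Q < Q' := Nat.lt_of_testBit k hF' h1 (fun j hj => by
      have := hk' j hj; rw [Nat.testBit_xor] at this
      cases h2 : Nat.testBit Q j <;> cases h3 : Nat.testBit Q' j <;> simp_all)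
    omega
  obtain ⟨j, -, hjk⟩ := exists_testBit_of_fold Finset.univ m k hQk
  refine ⟨j, m j ^^^ (Q ^^^ Q'), ?_, ?_⟩
  · apply Nat.lt_of_testBit k
    · rw [Nat.testBit_xor, hjk, Nat.testBit_xor, hQk]
      cases hQ' : Nat.testBit Q' k <;> simp_all
    · exact hjk
    · intro i hi
      rw [Nat.testBit_xor, hk' i hi, Bool.xor_false]
  · have hmem : j ∈ (Finset.univ : Finset (Fin n)) := Finset.mem_univ j
    have h1 := fold_xor_eq_of_mem Finset.univ (Function.update m j (m j ^^^ (Q ^^^ Q'))) hmem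
    rw [Function.update_self, Finset.fold_congr (g := m) (fun i hi => Function.update_of_ne
          (Finset.ne_of_mem_erase hi) _ _)] at h1
    have h2 := fold_xor_eq_of_mem Finset.univ m hmem
    rw [h1]
    rw [← hQdef] at h2
    rw [h2, Nat.xor_assoc (m j) _ Q', xor_cancel_left,
      Nat.xor_comm _ Q', xor_cancel_right]
end
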